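/- arXiv:1105.0062 — 2 statements merged into one kernel-verified Lean document; each statement's English description precedes it below -/
import Mathlib

section
/- For any s ≥ 0 and α ∈ (0,1), the function φ₋(-s) = -s·Γ(α(s-1)+1)/Γ(αs+1) admits the integral representation φ₋(-s) = -∫₀^∞ (1 - e^{-sy}) π_α(y) dy, where π_α(y) = (1-α)e^{y/α} / (α Γ(α+1)(e^{y/α}-1)^{2-α}). -/
open Real Set MeasureTheory intervalIntegral

lemma my_ae_ne_one : ∀ᵐ x : ℝ, x ≠ (1:ℝ) := by
  rw [MeasureTheory.ae_iff]
  simpa using Real.volume_singleton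

lemma my_beta_eq (a b : ℝ) (ha : 0 < a) (hb : 0 < b) :
    Complex.betaIntegral a b = ((∫ x in (0:ℝ)..1, x ^ (a-1) * (1-x) ^ (b-1) : ℝ) : ℂ) := by
  rw [Complex.betaIntegral, ← intervalIntegral.integral_ofReal]
  apply intervalIntegral.integral_congr_ae
  filter_upwards [my_ae_ne_one] with x hx1 hx
  rw [uIoc_of_le (by norm_num : (0:ℝ) ≤ 1)] at hx
  have hx0 : (0:ℝ) ≤ x := le_of_lt hx.1
  have hx1' : (0:ℝ) ≤ 1 - x := by
    rcases lt_or_eq_of_le hx.2 with h | h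
    · linarith
    · exact absurd h hx1
  rw [Complex.ofReal_mul, Complex.ofReal_cpow hx0, Complex.ofReal_cpow hx1']
  push_cast
  ring

lemma my_beta_val (a b : ℝ) (ha : 0 < a) (hb : 0 < b) :
    ∫ x in (0:ℝ)..1, x ^ (a-1) * (1-x) ^ (b-1) = Gamma a * Gamma b / Gamma (a+b) := by
  have h := Complex.Gamma_mul_Gamma_eq_betaIntegral (s := (a:ℂ)) (t := (b:ℂ))
    (by simpa using ha) (by simpa using hb)
  rw [my_beta_eq a b ha hb] at h
  have hG : Real.Gamma (a+b) ≠ 0 := (Real.Gamma_pos_of_pos (by linarith)).ne'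
  have : (↑(Gamma a * Gamma b) : ℂ) = ↑(Gamma (a+b) * ∫ x in (0:ℝ)..1, x ^ (a-1) * (1-x) ^ (b-1)) := by
    push_cast
    simpa [← Complex.ofReal_add, Complex.Gamma_ofReal] using h
  have h2 := Complex.ofReal_injective this
  field_simp
  linarith [h2]

lemma my_beta_integrable (a b : ℝ) (ha : 0 < a) (hb : 0 < b) :
    IntervalIntegrable (fun x : ℝ => x ^ (a-1) * (1-x) ^ (b-1)) volume 0 1 := by
  have h := (Complex.betaIntegral_convergent (u := (a:ℂ)) (v := (b:ℂ))
    (by simpa using ha) (by simpa using hb)).norm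
  apply h.congr_ae
  rw [uIoc_of_le (by norm_num : (0:ℝ) ≤ 1)]
  have : ∀ᵐ x : ℝ ∂(volume.restrict (Ioc 0 1)), x ≠ 1 := ae_restrict_of_ae my_ae_ne_one
  filter_upwards [this, ae_restrict_mem measurableSet_Ioc] with x hx1 hx
  have hx0 : (0:ℝ) < x := hx.1
  have hx1' : (0:ℝ) < 1 - x := lt_of_le_of_ne (by linarith [hx.2]) (by intro h; exact hx1 (by linarith))
  have e : (1 - (x:ℂ)) = ((1-x : ℝ) : ℂ) := by push_cast; ring
  rw [e, norm_mul,
    Complex.norm_cpow_eq_rpow_re_of_pos hx0, Complex.norm_cpow_eq_rpow_re_of_pos (by exact_mod_cast hx1')]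
  push_cast
  norm_num

lemma my_onesub (c : ℝ) (hc : 0 < c) (x : ℝ) (hx0 : 0 ≤ x) (hx1 : x ≤ 1) :
    1 - x ^ c ≤ (1 + c) * (1 - x) := by
  rcases le_total c 1 with h | h
  · rcases eq_or_lt_of_le hx0 with rfl | hx0'
    · have : (0:ℝ) ^ c = 0 := Real.zero_rpow hc.ne'
      rw [this]; nlinarith
    · have : x ^ (1:ℝ) ≤ x ^ c := Real.rpow_le_rpow_of_exponent_ge hx0' hx1 h
      rw [Real.rpow_one] at this
      nlinarith
  · have hb := one_add_mul_self_le_rpow_one_add (by linarith : (-1:ℝ) ≤ x - 1) h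
    rw [show (1 : ℝ) + (x - 1) = x by ring] at hb
    nlinarith

lemma my_F_deriv (α c : ℝ) (hα : α ∈ Ioo (0:ℝ) 1) (hc : 0 < c) {x : ℝ} (hx : x ∈ Ioo (0:ℝ) 1) :
    HasDerivAt (fun y : ℝ => (y ^ (1-α) - y ^ (c+1-α)) * (1-y) ^ (α-1) / (1-α))
      ((1 - x ^ c) * x ^ (-α) * (1-x) ^ (α-2)
        - c / (1-α) * (x ^ (c+1-α-1) * (1-x) ^ (α-1))) x := by
  obtain ⟨hα0, hα1⟩ := hα
  obtain ⟨hx0, hx1⟩ := hx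
  have h1x : (0:ℝ) < 1 - x := by linarith
  have hα' : (1:ℝ) - α ≠ 0 := by linarith
  have hA : HasDerivAt (fun y : ℝ => y ^ (1-α)) ((1-α) * x ^ (1-α-1)) x :=
    Real.hasDerivAt_rpow_const (Or.inl hx0.ne')
  have hB : HasDerivAt (fun y : ℝ => y ^ (c+1-α)) ((c+1-α) * x ^ (c+1-α-1)) x :=
    Real.hasDerivAt_rpow_const (Or.inl hx0.ne')
  have hC : HasDerivAt (fun y : ℝ => 1 - y) (-1) x := by
    simpa using (hasDerivAt_id x).const_sub 1
  have hD : HasDerivAt (fun y : ℝ => (1-y) ^ (α-1)) ((α-1) * (1-x) ^ (α-1-1) * (-1)) x := by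
    have := hC.rpow_const (p := α-1) (Or.inl h1x.ne')
    convert this using 1
    ring
  have hF := ((hA.sub hB).mul hD).div_const (1-α)
  refine hF.congr_deriv ?_
  symm
  simp only [Pi.sub_apply]
  rw [show 1-α-1 = -α by ring, show α-1-1 = α-2 by ring, show c+1-α-1 = c-α by ring]
  have e2 : x ^ (1-α) = x ^ (-α) * x := by
    rw [show 1-α = -α+1 by ring, Real.rpow_add_one hx0.ne']
  have e3 : x ^ (c-α) = x ^ c * x ^ (-α) := by
    rw [show c-α = c + -α by ring, Real.rpow_add hx0]
  have e4 : x ^ (c+1-α) = x ^ c * x ^ (-α) * x := by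
    rw [show c+1-α = (c + -α)+1 by ring, Real.rpow_add_one hx0.ne', Real.rpow_add hx0]
  have e5 : (1-x) ^ (α-1) = (1-x) ^ (α-2) * (1-x) := by
    rw [show α-1 = (α-2)+1 by ring, Real.rpow_add_one h1x.ne']
  rw [e2, e3, e4, e5]
  field_simp
  ring

lemma my_F_nonneg_le (α c : ℝ) (hα : α ∈ Ioo (0:ℝ) 1) (hc : 0 < c) {x : ℝ} (hx : x ∈ Icc (0:ℝ) 1) :
    0 ≤ (x ^ (1-α) - x ^ (c+1-α)) * (1-x) ^ (α-1) / (1-α) ∧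
    (x ^ (1-α) - x ^ (c+1-α)) * (1-x) ^ (α-1) / (1-α) ≤ (1+c) * (1-x) ^ α / (1-α) := by
  obtain ⟨hα0, hα1⟩ := hα
  obtain ⟨hx0, hx1⟩ := hx
  have hα' : (0:ℝ) < 1 - α := by linarith
  have efac : x ^ (c+1-α) = x ^ (1-α) * x ^ c := by
    rw [show c+1-α = (1-α) + c by ring, Real.rpow_add' hx0 (by positivity)]
  have hxc1 : x ^ c ≤ 1 := Real.rpow_le_one hx0 hx1 hc.le
  have hx1a : x ^ (1-α) ≤ 1 := Real.rpow_le_one hx0 hx1 (by linarith)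
  have hxle : 0 ≤ 1 - x ^ c := by linarith
  have h1xnn : (0:ℝ) ≤ 1 - x := by linarith
  have hpow_nn : (0:ℝ) ≤ (1-x) ^ (α-1) := Real.rpow_nonneg h1xnn _
  have hfacnn : (0:ℝ) ≤ x ^ (1-α) := Real.rpow_nonneg hx0 _
  constructor
  · apply div_nonneg _ hα'.le
    apply mul_nonneg _ hpow_nn
    rw [efac]; nlinarith
  · rw [div_le_div_iff_of_pos_right hα']
    rcases eq_or_lt_of_le hx1 with rfl | hx1'
    · simp [Real.one_rpow, Real.zero_rpow hα0.ne']
    · have h1x : (0:ℝ) < 1 - x := by linarith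
      have eα : (1-x) ^ α = (1-x) ^ (α-1) * (1-x) := by
        rw [show α = (α-1)+1 by ring, Real.rpow_add_one h1x.ne']
        ring_nf
      have hband := my_onesub c hc x hx0 hx1
      rw [efac, eα]
      nlinarith [mul_le_mul_of_nonneg_right hband hpow_nn,
        mul_le_mul_of_nonneg_right hx1a (mul_nonneg hxle hpow_nn),
        mul_nonneg hxle hpow_nn]

lemma my_F_cont (α c : ℝ) (hα : α ∈ Ioo (0:ℝ) 1) (hc : 0 < c) :
    ContinuousOn (fun y : ℝ => (y ^ (1-α) - y ^ (c+1-α)) * (1-y) ^ (α-1) / (1-α)) (Icc 0 1) := by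
  obtain ⟨hα0, hα1⟩ := hα
  intro x hx
  by_cases hx1 : x = 1
  · subst hx1
    have hF1 : ((1:ℝ) ^ (1-α) - 1 ^ (c+1-α)) * (1-1:ℝ) ^ (α-1) / (1-α) = 0 := by
      simp
    unfold ContinuousWithinAt
    simp only []
    rw [hF1]
    have htend : Filter.Tendsto (fun y : ℝ => (1+c) * (1-y) ^ α / (1-α)) (nhdsWithin 1 (Icc 0 1))
        (nhds 0) := by
      have hcont : ContinuousAt (fun y : ℝ => (1+c) * (1-y) ^ α / (1-α)) 1 := by
        apply ContinuousAt.div_const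
        apply ContinuousAt.mul continuousAt_const
        exact (ContinuousAt.rpow_const (by fun_prop) (Or.inr hα0.le))
      have h0 : (1+c) * (1-1:ℝ) ^ α / (1-α) = 0 := by
        simp [Real.zero_rpow hα0.ne']
      rw [← h0]
      exact hcont.continuousWithinAt
    apply squeeze_zero'
    · exact eventually_nhdsWithin_of_forall (fun y hy => (my_F_nonneg_le α c ⟨hα0, hα1⟩ hc hy).1)
    · exact eventually_nhdsWithin_of_forall (fun y hy => (my_F_nonneg_le α c ⟨hα0, hα1⟩ hc hy).2)
    · exact htend
  · have hx1' : x < 1 := lt_of_le_of_ne hx.2 hx1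
    apply ContinuousAt.continuousWithinAt
    have f1 : ContinuousAt (fun y : ℝ => y ^ (1-α)) x :=
      Real.continuousAt_rpow_const x (1-α) (Or.inr (by linarith))
    have f2 : ContinuousAt (fun y : ℝ => y ^ (c+1-α)) x :=
      Real.continuousAt_rpow_const x (c+1-α) (Or.inr (by linarith))
    have f3 : ContinuousAt (fun y : ℝ => (1-y) ^ (α-1)) x :=
      ContinuousAt.rpow_const (by fun_prop) (Or.inl (by intro h; exact hx1 (by linarith)))
    exact ((f1.sub f2).mul f3).div_const (1-α)

lemma my_g_integrable (α c : ℝ) (hα : α ∈ Ioo (0:ℝ) 1) (hc : 0 < c) :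
    IntegrableOn (fun x : ℝ => (1 - x ^ c) * x ^ (-α) * (1-x) ^ (α-2)) (Ioo 0 1) volume := by
  obtain ⟨hα0, hα1⟩ := hα
  have hbeta : IntervalIntegrable (fun x : ℝ => x ^ ((1-α)-1) * (1-x) ^ (α-1)) volume 0 1 :=
    my_beta_integrable (1-α) α (by linarith) hα0
  have hbound : IntegrableOn (fun x : ℝ => (1+c) * (x ^ ((1-α)-1) * (1-x) ^ (α-1))) (Ioo 0 1)
      volume :=
    ((hbeta.1.mono_set Ioo_subset_Ioc_self).const_mul _)
  apply Integrable.mono' hbound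
  · apply Measurable.aestronglyMeasurable
    fun_prop
  · filter_upwards [ae_restrict_mem measurableSet_Ioo] with x hx
    obtain ⟨hx0, hx1⟩ := hx
    have h1x : (0:ℝ) < 1 - x := by linarith
    have hxc1 : x ^ c ≤ 1 := Real.rpow_le_one hx0.le hx1.le hc.le
    have hnn : 0 ≤ (1 - x ^ c) * x ^ (-α) * (1-x) ^ (α-2) := by
      apply mul_nonneg (mul_nonneg (by linarith) (Real.rpow_nonneg hx0.le _))
        (Real.rpow_nonneg h1x.le _)
    rw [Real.norm_of_nonneg hnn]
    have e1 : x ^ ((1-α)-1) = x ^ (-α) := by rw [show (1-α)-1 = -α by ring]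
    have e5 : (1-x) ^ (α-1) = (1-x) ^ (α-2) * (1-x) := by
      rw [show α-1 = (α-2)+1 by ring, Real.rpow_add_one h1x.ne']
    rw [e1, e5]
    have hband := my_onesub c hc x hx0.le hx1.le
    nlinarith [Real.rpow_nonneg hx0.le (-α), Real.rpow_nonneg h1x.le (α-2),
      mul_nonneg (Real.rpow_nonneg hx0.le (-α)) (Real.rpow_nonneg h1x.le (α-2)),
      mul_le_mul_of_nonneg_right hband
        (mul_nonneg (Real.rpow_nonneg hx0.le (-α)) (Real.rpow_nonneg h1x.le (α-2)))]

lemma my_key (α c : ℝ) (hα : α ∈ Ioo (0:ℝ) 1) (hc : 0 < c) :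
    ∫ x in Ioo (0:ℝ) 1, (1 - x ^ c) * x ^ (-α) * (1-x) ^ (α-2)
      = c * (Gamma (c+1-α) * Gamma α) / ((1-α) * Gamma (c+1)) := by
  obtain ⟨hα0, hα1⟩ := hα
  have hα' : (0:ℝ) < 1 - α := by linarith
  have hca : (0:ℝ) < c + 1 - α := by linarith
  -- beta piece
  have hbetaI : IntervalIntegrable (fun x : ℝ => x ^ (c+1-α-1) * (1-x) ^ (α-1)) volume 0 1 :=
    my_beta_integrable (c+1-α) α hca hα0
  have hbetaV : ∫ x in (0:ℝ)..1, x ^ (c+1-α-1) * (1-x) ^ (α-1)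
      = Gamma (c+1-α) * Gamma α / Gamma (c+1) := by
    rw [my_beta_val (c+1-α) α hca hα0, show c+1-α+α = c+1 by ring]
  have hgI := my_g_integrable α c ⟨hα0, hα1⟩ hc
  have hbetaIoo : IntegrableOn (fun x : ℝ => x ^ (c+1-α-1) * (1-x) ^ (α-1)) (Ioo 0 1) volume :=
    hbetaI.1.mono_set Ioo_subset_Ioc_self
  -- FTC
  have hFTC : ∫ x in (0:ℝ)..1, ((1 - x ^ c) * x ^ (-α) * (1-x) ^ (α-2)
      - c / (1-α) * (x ^ (c+1-α-1) * (1-x) ^ (α-1))) = 0 := by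
    have hint : IntervalIntegrable (fun x : ℝ => (1 - x ^ c) * x ^ (-α) * (1-x) ^ (α-2)
        - c / (1-α) * (x ^ (c+1-α-1) * (1-x) ^ (α-1))) volume 0 1 := by
      apply IntervalIntegrable.sub
      · rw [intervalIntegrable_iff_integrableOn_Ioc_of_le (by norm_num : (0:ℝ) ≤ 1)]
        exact (integrableOn_Ioc_iff_integrableOn_Ioo).2 hgI
      · exact (hbetaI.const_mul _)
    have := intervalIntegral.integral_eq_sub_of_hasDeriv_right_of_le (by norm_num : (0:ℝ) ≤ 1)
      (my_F_cont α c ⟨hα0, hα1⟩ hc)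
      (fun x hx => (my_F_deriv α c ⟨hα0, hα1⟩ hc hx).hasDerivWithinAt) hint
    rw [this]
    have hF1 : ((1:ℝ) ^ (1-α) - 1 ^ (c+1-α)) * (1-1:ℝ) ^ (α-1) / (1-α) = 0 := by simp
    have hF0 : ((0:ℝ) ^ (1-α) - 0 ^ (c+1-α)) * (1-0:ℝ) ^ (α-1) / (1-α) = 0 := by
      rw [Real.zero_rpow (by linarith), Real.zero_rpow (by linarith)]
      simp
    rw [hF1, hF0, sub_zero]
  -- assemble
  have hsplit : ∀ x : ℝ, (1 - x ^ c) * x ^ (-α) * (1-x) ^ (α-2)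
      = ((1 - x ^ c) * x ^ (-α) * (1-x) ^ (α-2)
          - c / (1-α) * (x ^ (c+1-α-1) * (1-x) ^ (α-1)))
        + c / (1-α) * (x ^ (c+1-α-1) * (1-x) ^ (α-1)) := by
    intro x; ring
  have hFTC' : ∫ x in Ioo (0:ℝ) 1, ((1 - x ^ c) * x ^ (-α) * (1-x) ^ (α-2)
      - c / (1-α) * (x ^ (c+1-α-1) * (1-x) ^ (α-1))) = 0 := by
    rw [← MeasureTheory.integral_Ioc_eq_integral_Ioo, ← intervalIntegral.integral_of_le
      (by norm_num : (0:ℝ) ≤ 1)]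
    exact hFTC
  have hbetaV' : ∫ x in Ioo (0:ℝ) 1, x ^ (c+1-α-1) * (1-x) ^ (α-1)
      = Gamma (c+1-α) * Gamma α / Gamma (c+1) := by
    rw [← MeasureTheory.integral_Ioc_eq_integral_Ioo, ← intervalIntegral.integral_of_le
      (by norm_num : (0:ℝ) ≤ 1)]
    exact hbetaV
  calc ∫ x in Ioo (0:ℝ) 1, (1 - x ^ c) * x ^ (-α) * (1-x) ^ (α-2)
      = ∫ x in Ioo (0:ℝ) 1, (((1 - x ^ c) * x ^ (-α) * (1-x) ^ (α-2)
          - c / (1-α) * (x ^ (c+1-α-1) * (1-x) ^ (α-1)))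
        + c / (1-α) * (x ^ (c+1-α-1) * (1-x) ^ (α-1))) := by
        apply MeasureTheory.integral_congr_ae
        filter_upwards with x using hsplit x
    _ = (∫ x in Ioo (0:ℝ) 1, ((1 - x ^ c) * x ^ (-α) * (1-x) ^ (α-2)
          - c / (1-α) * (x ^ (c+1-α-1) * (1-x) ^ (α-1))))
        + ∫ x in Ioo (0:ℝ) 1, c / (1-α) * (x ^ (c+1-α-1) * (1-x) ^ (α-1)) := by
        apply MeasureTheory.integral_add (hgI.sub (hbetaIoo.const_mul _))
          (hbetaIoo.const_mul _)
    _ = 0 + c / (1-α) * (Gamma (c+1-α) * Gamma α / Gamma (c+1)) := by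
        rw [hFTC', MeasureTheory.integral_const_mul, hbetaV']
    _ = c * (Gamma (c+1-α) * Gamma α) / ((1-α) * Gamma (c+1)) := by
        rw [zero_add]
        field_simp

lemma my_img (α : ℝ) (hα0 : 0 < α) :
    (fun y : ℝ => Real.exp (-(y/α))) '' (Ioi 0) = Ioo 0 1 := by
  ext x
  constructor
  · rintro ⟨y, hy, rfl⟩
    exact ⟨Real.exp_pos _, Real.exp_lt_one_iff.2 (by
      simp only [neg_neg, Left.neg_neg_iff]
      exact div_pos hy hα0)⟩
  · rintro ⟨hx0, hx1⟩
    refine ⟨-α * Real.log x, ?_, ?_⟩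
    · have : Real.log x < 0 := Real.log_neg hx0 hx1
      simp only [mem_Ioi]
      nlinarith
    · show Real.exp (-(-α * Real.log x / α)) = x
      rw [show -(-α * Real.log x / α) = Real.log x by field_simp, Real.exp_log hx0]

lemma my_cov (α s : ℝ) (hα : α ∈ Ioo (0:ℝ) 1) (hs : 0 < s) :
    ∫ y in Ioi (0:ℝ),
        (1 - Real.exp (-s * y)) *
          ((1 - α) * Real.exp (y / α) /
            (α * Real.Gamma (α + 1) * (Real.exp (y / α) - 1) ^ (2 - α)))
      = ∫ x in Ioo (0:ℝ) 1,
          (1-α) / Real.Gamma (α+1) * ((1 - x ^ (α*s)) * x ^ (-α) * (1-x) ^ (α-2)) := by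
  obtain ⟨hα0, hα1⟩ := hα
  have hG : (0:ℝ) < Real.Gamma (α+1) := Real.Gamma_pos_of_pos (by linarith)
  set H : ℝ → ℝ := fun x =>
    (1-α) / Real.Gamma (α+1) * ((1 - x ^ (α*s)) * x ^ (-α) * (1-x) ^ (α-2)) with hH
  have hderiv : ∀ y ∈ Ioi (0:ℝ), HasDerivWithinAt (fun y : ℝ => Real.exp (-(y/α)))
      (Real.exp (-(y/α)) * -(1/α)) (Ioi 0) y := by
    intro y _
    have h1 : HasDerivAt (fun y : ℝ => -(y/α)) (-(1/α)) y := by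
      simpa [Pi.neg_def] using ((hasDerivAt_id y).div_const α).neg
    exact ((Real.hasDerivAt_exp _).comp y h1).hasDerivWithinAt
  have hinj : InjOn (fun y : ℝ => Real.exp (-(y/α))) (Ioi 0) := by
    intro a _ b _ h
    have h2 := Real.exp_injective h
    have h3 : a / α = b / α := by linarith [neg_injective h2]
    field_simp at h3
    exact h3
  have key := integral_image_eq_integral_abs_deriv_smul measurableSet_Ioi hderiv hinj H
  rw [my_img α hα0] at key
  rw [key]
  apply MeasureTheory.setIntegral_congr_fun measurableSet_Ioi
  intro y hy
  have hy0 : (0:ℝ) < y := hy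
  set x : ℝ := Real.exp (-(y/α)) with hxdef
  have hx0 : (0:ℝ) < x := Real.exp_pos _
  have hx1 : x < 1 := Real.exp_lt_one_iff.2 (by
    simp only [Left.neg_neg_iff]; positivity)
  have h1x : (0:ℝ) < 1 - x := by linarith
  have hxe : Real.exp (y/α) = x⁻¹ := by
    rw [hxdef, ← Real.exp_neg, neg_neg]
  have hxc : x ^ (α*s) = Real.exp (-s * y) := by
    rw [hxdef, ← Real.exp_log (Real.exp_pos (-(y/α))), Real.log_exp,
      ← Real.exp_mul]
    congr 1
    field_simp
  have hE : Real.exp (y/α) - 1 = (1-x)/x := by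
    rw [hxe]; field_simp
  have hEp : (Real.exp (y/α) - 1) ^ (2-α) = (1-x) ^ (2-α) / x ^ (2-α) := by
    rw [hE, Real.div_rpow h1x.le hx0.le]
  have e6 : x ^ ((2:ℝ)-α) = x ^ (-α) * x * x := by
    rw [show (2:ℝ)-α = (-α+1)+1 by ring, Real.rpow_add_one hx0.ne', Real.rpow_add_one hx0.ne']
  have e7 : (1-x) ^ (α-2) = ((1-x) ^ ((2:ℝ)-α))⁻¹ := by
    rw [show α-2 = -(2-α) by ring, Real.rpow_neg h1x.le]
  have hP : (0:ℝ) < (1-x) ^ ((2:ℝ)-α) := Real.rpow_pos_of_pos h1x _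
  have hA : (0:ℝ) < x ^ (-α) := Real.rpow_pos_of_pos hx0 _
  simp only [smul_eq_mul, hH]
  rw [abs_mul, abs_of_pos (Real.exp_pos _), abs_neg, abs_of_pos (by positivity : (0:ℝ) < 1/α)]
  rw [← hxdef, hxc, hEp, hxe, e6, e7]
  field_simp

theorem stmt_0 (α : ℝ) (hα : α ∈ Set.Ioo (0:ℝ) 1) (s : ℝ) (hs : 0 ≤ s) :
    -(s * Real.Gamma (α * (s - 1) + 1) / Real.Gamma (α * s + 1)) =
      -∫ y in Set.Ioi (0:ℝ),
        (1 - Real.exp (-s * y)) *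
          ((1 - α) * Real.exp (y / α) /
            (α * Real.Gamma (α + 1) * (Real.exp (y / α) - 1) ^ (2 - α))) := by
  rcases eq_or_lt_of_le hs with rfl | hs'
  · simp
  · obtain ⟨hα0, hα1⟩ := hα
    rw [neg_inj, my_cov α s ⟨hα0, hα1⟩ hs', MeasureTheory.integral_const_mul,
      my_key α (α*s) ⟨hα0, hα1⟩ (by positivity)]
    have hGα : Real.Gamma α ≠ 0 := (Real.Gamma_pos_of_pos hα0).ne'
    have hGs : Real.Gamma (α*s+1) ≠ 0 := (Real.Gamma_pos_of_pos (by positivity)).ne'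
    have h1α : (1:ℝ) - α ≠ 0 := by linarith
    rw [show α*(s-1)+1 = α*s+1-α by ring, Real.Gamma_add_one hα0.ne']
    field_simp
end

section
/- For α ∈ (0,1), the function π_α(y) = (1-α)e^{y/α} / (α Γ(α+1)(e^{y/α}-1)^{2-α}) is positive and non-increasing on (0,∞), and satisfies ∫₀^∞ min(1,y) π_α(y) dy < ∞. -/
open Real Set MeasureTheory

theorem stmt_1 (α : ℝ) (hα : α ∈ Set.Ioo (0:ℝ) 1) :
    (∀ y : ℝ, 0 < y →
      0 < (1 - α) * Real.exp (y / α) /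
            (α * Real.Gamma (α + 1) * (Real.exp (y / α) - 1) ^ (2 - α))) ∧
    AntitoneOn (fun y : ℝ =>
      (1 - α) * Real.exp (y / α) /
        (α * Real.Gamma (α + 1) * (Real.exp (y / α) - 1) ^ (2 - α))) (Set.Ioi 0) ∧
    MeasureTheory.IntegrableOn (fun y : ℝ =>
      min 1 y * ((1 - α) * Real.exp (y / α) /
        (α * Real.Gamma (α + 1) * (Real.exp (y / α) - 1) ^ (2 - α)))) (Set.Ioi 0) := by
  obtain ⟨hα0, hα1⟩ := hα
  have hΓ : 0 < Real.Gamma (α + 1) := Real.Gamma_pos_of_pos (by linarith)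
  set D : ℝ := α * Real.Gamma (α + 1) with hDdef
  have hD : 0 < D := mul_pos hα0 hΓ
  have hexp : ∀ y : ℝ, 0 < y → 1 < Real.exp (y / α) := by
    intro y hy
    exact Real.one_lt_exp_iff.2 (div_pos hy hα0)
  have h1α : (0:ℝ) < 1 - α := by linarith
  have hpos : ∀ y : ℝ, 0 < y →
      0 < (1 - α) * Real.exp (y / α) / (D * (Real.exp (y / α) - 1) ^ (2 - α)) := by
    intro y hy
    have hu : 0 < Real.exp (y / α) - 1 := by linarith [hexp y hy]
    exact div_pos (mul_pos h1α (Real.exp_pos _))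
      (mul_pos hD (Real.rpow_pos_of_pos hu _))
  refine ⟨hpos, ?_, ?_⟩
  · -- Antitone
    intro x hx y hy hxy
    simp only
    set s := Real.exp (x / α) with hs
    set t := Real.exp (y / α) with ht
    have hs1 : 1 < s := hexp x hx
    have ht1 : 1 < t := hexp y hy
    have hst : s ≤ t := Real.exp_le_exp.2 (by gcongr)
    have hsp : 0 < s - 1 := by linarith
    have htp : 0 < t - 1 := by linarith
    rw [div_le_div_iff₀ (mul_pos hD (Real.rpow_pos_of_pos htp _))
      (mul_pos hD (Real.rpow_pos_of_pos hsp _))]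
    have hsplit : ∀ u : ℝ, 0 < u → u ^ (2 - α) = u * u ^ (1 - α) := by
      intro u hu
      rw [show (2 - α : ℝ) = 1 + (1 - α) by ring, Real.rpow_add hu, Real.rpow_one]
    have key : t * (s - 1) ^ (2 - α) ≤ s * (t - 1) ^ (2 - α) := by
      rw [hsplit _ hsp, hsplit _ htp]
      calc t * ((s - 1) * (s - 1) ^ (1 - α)) = (t * (s - 1)) * (s - 1) ^ (1 - α) := by ring
        _ ≤ (s * (t - 1)) * (t - 1) ^ (1 - α) := by
            apply mul_le_mul (by nlinarith)
              (Real.rpow_le_rpow hsp.le (by linarith) h1α.le)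
              (Real.rpow_nonneg hsp.le _) (by nlinarith)
        _ = s * ((t - 1) * (t - 1) ^ (1 - α)) := by ring
    have hc : (0:ℝ) ≤ (1 - α) * D := le_of_lt (mul_pos h1α hD)
    calc (1 - α) * t * (D * (s - 1) ^ (2 - α))
        = ((1 - α) * D) * (t * (s - 1) ^ (2 - α)) := by ring
      _ ≤ ((1 - α) * D) * (s * (t - 1) ^ (2 - α)) := mul_le_mul_of_nonneg_left key hc
      _ = (1 - α) * s * (D * (t - 1) ^ (2 - α)) := by ring
  · -- Integrability
    have hmeas : Measurable (fun y : ℝ =>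
        min 1 y * ((1 - α) * Real.exp (y / α) / (D * (Real.exp (y / α) - 1) ^ (2 - α)))) := by
      apply (measurable_const.min measurable_id).mul
      apply Measurable.div
      · exact (Real.measurable_exp.comp (measurable_id.div_const α)).const_mul _
      · exact (((Real.measurable_exp.comp (measurable_id.div_const α)).sub
          measurable_const).pow measurable_const).const_mul _
    rw [show Set.Ioi (0:ℝ) = Set.Ioc 0 1 ∪ Set.Ioi 1 from
      (Set.Ioc_union_Ioi_eq_Ioi (by norm_num)).symm]
    apply MeasureTheory.IntegrableOn.union
    · -- on (0,1]
      set C : ℝ := (1 - α) * Real.exp (1 / α) * α ^ (2 - α) / D with hC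
      have hgint : MeasureTheory.IntegrableOn (fun y : ℝ => C * y ^ (α - 1)) (Set.Ioc 0 1) := by
        have h0 : IntervalIntegrable (fun y : ℝ => y ^ (α - 1)) volume 0 1 :=
          intervalIntegral.intervalIntegrable_rpow' (by linarith)
        have h1 : MeasureTheory.IntegrableOn (fun y : ℝ => y ^ (α - 1)) (Set.Ioc 0 1) :=
          (intervalIntegrable_iff_integrableOn_Ioc_of_le (by norm_num)).1 h0
        exact h1.const_mul C
      apply MeasureTheory.Integrable.mono' hgint hmeas.aestronglyMeasurable.restrict
      rw [MeasureTheory.ae_restrict_iff' measurableSet_Ioc]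
      refine MeasureTheory.ae_of_all _ fun y hy => ?_
      obtain ⟨hy0, hy1⟩ := hy
      have hu : 0 < Real.exp (y / α) - 1 := by linarith [hexp y hy0]
      have hya : 0 < y / α := div_pos hy0 hα0
      have hmin : min 1 y = y := min_eq_right hy1
      have hfnn := (hpos y hy0).le
      rw [Real.norm_eq_abs, abs_of_nonneg (mul_nonneg (le_min zero_le_one hy0.le) hfnn), hmin]
      have hb1 : (1 - α) * Real.exp (y / α) ≤ (1 - α) * Real.exp (1 / α) := by
        apply mul_le_mul_of_nonneg_left _ h1α.le
        exact Real.exp_le_exp.2 (by gcongr)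
      have hb2 : (y / α) ^ (2 - α) ≤ (Real.exp (y / α) - 1) ^ (2 - α) :=
        Real.rpow_le_rpow hya.le (by linarith [Real.add_one_le_exp (y / α)]) (by linarith)
      have hb3 : 0 < D * (y / α) ^ (2 - α) := mul_pos hD (Real.rpow_pos_of_pos hya _)
      have hb : (1 - α) * Real.exp (y / α) / (D * (Real.exp (y / α) - 1) ^ (2 - α)) ≤
          (1 - α) * Real.exp (1 / α) / (D * (y / α) ^ (2 - α)) :=
        div_le_div₀ (by positivity) hb1 hb3 (mul_le_mul_of_nonneg_left hb2 hD.le)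
      have heq : y * ((1 - α) * Real.exp (1 / α) / (D * (y / α) ^ (2 - α))) = C * y ^ (α - 1) := by
        have hy2 : y ^ (α - 1) = y / y ^ (2 - α) := by
          rw [eq_div_iff (Real.rpow_pos_of_pos hy0 _).ne', ← Real.rpow_add hy0]
          norm_num
        rw [Real.div_rpow hy0.le hα0.le, hy2, hC]
        have h1 : (y:ℝ) ^ (2 - α) ≠ 0 := (Real.rpow_pos_of_pos hy0 _).ne'
        have h2 : (α:ℝ) ^ (2 - α) ≠ 0 := (Real.rpow_pos_of_pos hα0 _).ne'
        field_simp
      calc y * ((1 - α) * Real.exp (y / α) / (D * (Real.exp (y / α) - 1) ^ (2 - α)))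
          ≤ y * ((1 - α) * Real.exp (1 / α) / (D * (y / α) ^ (2 - α))) :=
            mul_le_mul_of_nonneg_left hb hy0.le
        _ = C * y ^ (α - 1) := heq
    · -- on (1,∞)
      have hint : MeasureTheory.IntegrableOn
          (fun y : ℝ => (1 - α) * Real.exp (y / α) / (D * (Real.exp (y / α) - 1) ^ (2 - α)))
          (Set.Ioi 1) := by
        apply integrableOn_Ioi_deriv_of_nonneg'
          (g := fun y : ℝ => -(α / D) * (Real.exp (y / α) - 1) ^ (α - 1))
          (l := 0)
        · intro x hx
          have hx1 : (1:ℝ) ≤ x := hx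
          have hu : 0 < Real.exp (x / α) - 1 := by linarith [hexp x (by linarith : (0:ℝ) < x)]
          have hd1 : HasDerivAt (fun y : ℝ => Real.exp (y / α) - 1)
              (Real.exp (x / α) * (1 / α)) x := by
            have h := ((hasDerivAt_id x).div_const α).exp
            simpa using h.sub_const 1
          have hd2 := (hd1.rpow_const (p := α - 1) (Or.inl hu.ne')).const_mul (-(α / D))
          refine hd2.congr_deriv ?_
          rw [show (α - 1 - 1 : ℝ) = -(2 - α) by ring, Real.rpow_neg hu.le]
          have h1 : (Real.exp (x / α) - 1) ^ (2 - α) ≠ 0 := (Real.rpow_pos_of_pos hu _).ne'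
          field_simp
          ring
        · intro x hx
          exact (hpos x (by linarith [Set.mem_Ioi.mp hx] : (0:ℝ) < x)).le
        · have hinf : Filter.Tendsto (fun y : ℝ => Real.exp (y / α) - 1)
              Filter.atTop Filter.atTop := by
            have := Filter.tendsto_atTop_add_const_right Filter.atTop (-1 : ℝ)
              (Real.tendsto_exp_atTop.comp (Filter.tendsto_id.atTop_div_const hα0))
            simpa [sub_eq_add_neg] using this
          have h0 : Filter.Tendsto (fun y : ℝ => (Real.exp (y / α) - 1) ^ (α - 1))
              Filter.atTop (nhds 0) := by
            have := (tendsto_rpow_neg_atTop h1α).comp hinf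
            simpa [Function.comp_def, show -(1 - α) = α - 1 by ring] using this
          simpa using h0.const_mul (-(α / D))
      apply hint.congr_fun _ measurableSet_Ioi
      intro y hy
      simp [min_eq_left (le_of_lt (Set.mem_Ioi.mp hy))]
end
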